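/- Splitting permutation-equivalent parts yields permutation-equivalent wholes: for all lists l, l', l1, l1', l2, l2', if split l l1 l2, split l' l1' l2', permute l1 l1', and permute l2 l2', then permute l l'. -/

import Mathlib

inductive split {α : Type*} : List α → List α → List α → Prop
  | nil : split [] [] []
  | left {x : α} {l1 l2 l3 : List α} : split l1 l2 l3 → split (x :: l1) (x :: l2) l3
  | right {x : α} {l1 l2 l3 : List α} : split l1 l2 l3 → split (x :: l1) l2 (x :: l3)

inductive permute {α : Type*} : List α → List α → Prop
  | nil : permute [] []
  | cons {x : α} {l1 l2 l22 : List α} :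
      split l2 [x] l22 → permute l1 l22 → permute (x :: l1) l2

lemma split_perm {α : Type*} {l l1 l2 : List α} (h : split l l1 l2) : l.Perm (l1 ++ l2) := by
  induction h with
  | nil => simp
  | left h ih => exact ih.cons _
  | right h ih => exact (ih.cons _).trans List.perm_middle.symm

lemma permute_perm {α : Type*} {l l' : List α} (h : permute l l') : l.Perm l' := by
  induction h with
  | nil => exact List.Perm.refl _
  | cons hs _ ih => exact ((ih.cons _).trans (split_perm hs).symm)

lemma split_all_right {α : Type*} (l : List α) : split l [] l := by
  induction l with
  | nil => exact split.nil
  | cons x t ih => exact split.right ih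

lemma split_single {α : Type*} {x : α} {l : List α} (h : x ∈ l) :
    ∃ l2, split l [x] l2 ∧ l.Perm (x :: l2) := by
  induction l with
  | nil => cases h
  | cons y t ih =>
    rcases List.mem_cons.mp h with rfl | h
    · exact ⟨t, split.left (split_all_right t), List.Perm.refl _⟩
    · obtain ⟨l2, hs, hp⟩ := ih h
      exact ⟨y :: l2, split.right hs, (hp.cons y).trans (List.Perm.swap _ _ _)⟩

lemma perm_permute {α : Type*} {l l' : List α} (h : l.Perm l') : permute l l' := by
  induction l generalizing l' with
  | nil => rw [← h.nil_eq]; exact permute.nil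
  | cons x t ih =>
    have hx : x ∈ l' := h.mem_iff.mp List.mem_cons_self
    obtain ⟨l2, hs, hp⟩ := split_single hx
    exact permute.cons hs (ih ((h.trans hp).cons_inv))

theorem split_permute {α : Type*} (l l' l1 l1' l2 l2' : List α)
    (hs : split l l1 l2) (hs' : split l' l1' l2')
    (hp1 : permute l1 l1') (hp2 : permute l2 l2') : permute l l' := by
  exact perm_permute ((split_perm hs).trans
    (((permute_perm hp1).append (permute_perm hp2)).trans (split_perm hs').symm))
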